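/- arXiv:2405.15408 — 3 statements merged into one kernel-verified Lean document; each statement's English description precedes it below -/
import Mathlib

section
/- Let Σ¹, Σ², Σ³ be antisymmetric real 4×4 matrices such that ∑_{μ,ν,ρ,σ} ε_{μνρσ} Σⁱ_{μν} Σʲ_{ρσ} = 8 v δ^{ij} for all i,j and some real v ≠ 0, and suppose the orientation condition holds: for all X, Y ∈ ℝ⁴ with ∑_μ X_μ Σ¹_{μν} = ∑_μ Y_μ Σ²_{μν} for every ν, one has ∑_{μ,ν} Σ³_{μν} X_μ Y_ν ≤ 0. Define g : ℝ⁴ × ℝ⁴ → ℝ by g(X,Y) := −(1/(12v)) · ∑_{i,j,k} ∑_{μ,ν,ρ,σ,α,β} ε^{ijk} ε_{μνρσ} X_α Σⁱ_{αμ} Y_β Σʲ_{βν} Σᵏ_{ρσ} (the coordinate form of the formula g(X,Y)·vol_Σ = −(1/6) ε^{ijk} i_XΣⁱ ∧ i_YΣʲ ∧ Σᵏ). Then g is a symmetric, positive-definite bilinear form on ℝ⁴. -/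
open Matrix BigOperators

/-- Levi-Civita symbol on four indices, `ε 0 1 2 3 = 1`. -/
noncomputable def eps4 (μ ν ρ σ : Fin 4) : ℝ :=
  Matrix.det (Matrix.of fun a b => if ![μ, ν, ρ, σ] a = b then (1 : ℝ) else 0)

/-- Levi-Civita symbol on three indices, `ε 0 1 2 = 1`. -/
noncomputable def eps3 (i j k : Fin 3) : ℝ :=
  Matrix.det (Matrix.of fun a b => if ![i, j, k] a = b then (1 : ℝ) else 0)

/-- The Urbantke metric defined by a triple of 2-forms:
`g(X,Y) := −(1/(12v)) ε^{ijk} ε_{μνρσ} X_α Σⁱ_{αμ} Y_β Σʲ_{βν} Σᵏ_{ρσ}`. -/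
noncomputable def urbantke (v : ℝ) (Sig : Fin 3 → Matrix (Fin 4) (Fin 4) ℝ)
    (X Y : Fin 4 → ℝ) : ℝ :=
  -(1 / (12 * v)) * ∑ i, ∑ j, ∑ k, ∑ μ, ∑ ν, ∑ ρ, ∑ σ, ∑ α, ∑ β,
    eps3 i j k * eps4 μ ν ρ σ * X α * Sig i α μ * Y β * Sig j β ν * Sig k ρ σ

set_option linter.unreachableTactic false
set_option linter.unusedTactic false
set_option linter.unnecessarySeqFocus false
lemma eps4_swap01 (μ ν ρ σ : Fin 4) : eps4 ν μ ρ σ = -eps4 μ ν ρ σ := by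
  have h : (Matrix.of fun a b => if ![ν, μ, ρ, σ] a = b then (1:ℝ) else 0)
      = (Matrix.of fun a b => if ![μ, ν, ρ, σ] a = b then (1:ℝ) else 0).submatrix
        (Equiv.swap 0 1) id := by
    ext a b; fin_cases a <;> simp [Equiv.swap_apply_def] <;> rfl
  unfold eps4; rw [h, Matrix.det_permute]; norm_num [Fin.ext_iff]

lemma eps4_swap12 (μ ν ρ σ : Fin 4) : eps4 μ ρ ν σ = -eps4 μ ν ρ σ := by
  have h : (Matrix.of fun a b => if ![μ, ρ, ν, σ] a = b then (1:ℝ) else 0)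
      = (Matrix.of fun a b => if ![μ, ν, ρ, σ] a = b then (1:ℝ) else 0).submatrix
        (Equiv.swap 1 2) id := by
    ext a b; fin_cases a <;> simp [Equiv.swap_apply_def] <;> rfl
  unfold eps4; rw [h, Matrix.det_permute]; norm_num [Fin.ext_iff]

lemma eps4_swap23 (μ ν ρ σ : Fin 4) : eps4 μ ν σ ρ = -eps4 μ ν ρ σ := by
  have h : (Matrix.of fun a b => if ![μ, ν, σ, ρ] a = b then (1:ℝ) else 0)
      = (Matrix.of fun a b => if ![μ, ν, ρ, σ] a = b then (1:ℝ) else 0).submatrix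
        (Equiv.swap 2 3) id := by
    ext a b; fin_cases a <;> simp [Equiv.swap_apply_def] <;> rfl
  unfold eps4; rw [h, Matrix.det_permute]
  norm_num [Fin.ext_iff, show ((3:Fin 4):ℕ) = 3 from rfl]

lemma eps3_swap01 (i j k : Fin 3) : eps3 j i k = -eps3 i j k := by
  have h : (Matrix.of fun a b => if ![j, i, k] a = b then (1:ℝ) else 0)
      = (Matrix.of fun a b => if ![i, j, k] a = b then (1:ℝ) else 0).submatrix
        (Equiv.swap 0 1) id := by
    ext a b; fin_cases a <;> simp [Equiv.swap_apply_def] <;> rfl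
  unfold eps3; rw [h, Matrix.det_permute]; norm_num [Fin.ext_iff]

lemma eps3_swap12 (i j k : Fin 3) : eps3 i k j = -eps3 i j k := by
  have h : (Matrix.of fun a b => if ![i, k, j] a = b then (1:ℝ) else 0)
      = (Matrix.of fun a b => if ![i, j, k] a = b then (1:ℝ) else 0).submatrix
        (Equiv.swap 1 2) id := by
    ext a b; fin_cases a <;> simp [Equiv.swap_apply_def] <;> rfl
  unfold eps3; rw [h, Matrix.det_permute]; norm_num [Fin.ext_iff]

@[simp] lemma eps4_0123 : eps4 0 1 2 3 = 1 := by
  have h : (Matrix.of fun a b => if ![(0:Fin 4), 1, 2, 3] a = b then (1:ℝ) else 0)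
      = (1 : Matrix (Fin 4) (Fin 4) ℝ) := by
    ext a b; fin_cases a <;> simp [Matrix.one_apply] <;> rfl
  unfold eps4; rw [h, Matrix.det_one]

@[simp] lemma eps3_012 : eps3 0 1 2 = 1 := by
  have h : (Matrix.of fun a b => if ![(0:Fin 3), 1, 2] a = b then (1:ℝ) else 0)
      = (1 : Matrix (Fin 3) (Fin 3) ℝ) := by
    ext a b; fin_cases a <;> simp [Matrix.one_apply] <;> rfl
  unfold eps3; rw [h, Matrix.det_one]

@[simp] lemma eps4_diag01 (μ ρ σ : Fin 4) : eps4 μ μ ρ σ = 0 :=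
  Matrix.det_zero_of_row_eq (i := 0) (j := 1) (by decide) (by ext b; simp; rfl)
@[simp] lemma eps4_diag02 (μ ν σ : Fin 4) : eps4 μ ν μ σ = 0 :=
  Matrix.det_zero_of_row_eq (i := 0) (j := 2) (by decide) (by ext b; simp; rfl)
@[simp] lemma eps4_diag03 (μ ν ρ : Fin 4) : eps4 μ ν ρ μ = 0 :=
  Matrix.det_zero_of_row_eq (i := 0) (j := 3) (by decide) (by ext b; simp; rfl)
@[simp] lemma eps4_diag12 (μ ν σ : Fin 4) : eps4 μ ν ν σ = 0 :=
  Matrix.det_zero_of_row_eq (i := 1) (j := 2) (by decide) (by ext b; simp; rfl)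
@[simp] lemma eps4_diag13 (μ ν ρ : Fin 4) : eps4 μ ν ρ ν = 0 :=
  Matrix.det_zero_of_row_eq (i := 1) (j := 3) (by decide) (by ext b; simp; rfl)
@[simp] lemma eps4_diag23 (μ ν ρ : Fin 4) : eps4 μ ν ρ ρ = 0 :=
  Matrix.det_zero_of_row_eq (i := 2) (j := 3) (by decide) (by ext b; simp; rfl)
@[simp] lemma eps3_diag01 (i k : Fin 3) : eps3 i i k = 0 :=
  Matrix.det_zero_of_row_eq (i := 0) (j := 1) (by decide) (by ext b; simp; rfl)
@[simp] lemma eps3_diag02 (i j : Fin 3) : eps3 i j i = 0 :=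
  Matrix.det_zero_of_row_eq (i := 0) (j := 2) (by decide) (by ext b; simp; rfl)
@[simp] lemma eps3_diag12 (i j : Fin 3) : eps3 i j j = 0 :=
  Matrix.det_zero_of_row_eq (i := 1) (j := 2) (by decide) (by ext b; simp; rfl)

@[simp] lemma eps4_0132 : eps4 0 1 3 2 = -1 := by rw [eps4_swap23]; norm_num [eps4_0123]
@[simp] lemma eps4_0213 : eps4 0 2 1 3 = -1 := by rw [eps4_swap12]; norm_num [eps4_0123]
@[simp] lemma eps4_0231 : eps4 0 2 3 1 = 1 := by rw [eps4_swap23, eps4_swap12]; norm_num [eps4_0123]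
@[simp] lemma eps4_0312 : eps4 0 3 1 2 = 1 := by rw [eps4_swap12, eps4_swap23]; norm_num [eps4_0123]
@[simp] lemma eps4_0321 : eps4 0 3 2 1 = -1 := by rw [eps4_swap12, eps4_swap23, eps4_swap12]; norm_num [eps4_0123]
@[simp] lemma eps4_1023 : eps4 1 0 2 3 = -1 := by rw [eps4_swap01]; norm_num [eps4_0123]
@[simp] lemma eps4_1032 : eps4 1 0 3 2 = 1 := by rw [eps4_swap01, eps4_swap23]; norm_num [eps4_0123]
@[simp] lemma eps4_1203 : eps4 1 2 0 3 = 1 := by rw [eps4_swap12, eps4_swap01]; norm_num [eps4_0123]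
@[simp] lemma eps4_1230 : eps4 1 2 3 0 = -1 := by rw [eps4_swap23, eps4_swap12, eps4_swap01]; norm_num [eps4_0123]
@[simp] lemma eps4_1302 : eps4 1 3 0 2 = -1 := by rw [eps4_swap12, eps4_swap01, eps4_swap23]; norm_num [eps4_0123]
@[simp] lemma eps4_1320 : eps4 1 3 2 0 = 1 := by rw [eps4_swap12, eps4_swap23, eps4_swap12, eps4_swap01]; norm_num [eps4_0123]
@[simp] lemma eps4_2013 : eps4 2 0 1 3 = 1 := by rw [eps4_swap01, eps4_swap12]; norm_num [eps4_0123]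
@[simp] lemma eps4_2031 : eps4 2 0 3 1 = -1 := by rw [eps4_swap01, eps4_swap23, eps4_swap12]; norm_num [eps4_0123]
@[simp] lemma eps4_2103 : eps4 2 1 0 3 = -1 := by rw [eps4_swap01, eps4_swap12, eps4_swap01]; norm_num [eps4_0123]
@[simp] lemma eps4_2130 : eps4 2 1 3 0 = 1 := by rw [eps4_swap01, eps4_swap23, eps4_swap12, eps4_swap01]; norm_num [eps4_0123]
@[simp] lemma eps4_2301 : eps4 2 3 0 1 = 1 := by rw [eps4_swap12, eps4_swap01, eps4_swap23, eps4_swap12]; norm_num [eps4_0123]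
@[simp] lemma eps4_2310 : eps4 2 3 1 0 = -1 := by rw [eps4_swap12, eps4_swap01, eps4_swap23, eps4_swap12, eps4_swap01]; norm_num [eps4_0123]
@[simp] lemma eps4_3012 : eps4 3 0 1 2 = -1 := by rw [eps4_swap01, eps4_swap12, eps4_swap23]; norm_num [eps4_0123]
@[simp] lemma eps4_3021 : eps4 3 0 2 1 = 1 := by rw [eps4_swap01, eps4_swap12, eps4_swap23, eps4_swap12]; norm_num [eps4_0123]
@[simp] lemma eps4_3102 : eps4 3 1 0 2 = 1 := by rw [eps4_swap01, eps4_swap12, eps4_swap01, eps4_swap23]; norm_num [eps4_0123]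
@[simp] lemma eps4_3120 : eps4 3 1 2 0 = -1 := by rw [eps4_swap01, eps4_swap12, eps4_swap23, eps4_swap12, eps4_swap01]; norm_num [eps4_0123]
@[simp] lemma eps4_3201 : eps4 3 2 0 1 = -1 := by rw [eps4_swap01, eps4_swap12, eps4_swap01, eps4_swap23, eps4_swap12]; norm_num [eps4_0123]
@[simp] lemma eps4_3210 : eps4 3 2 1 0 = 1 := by rw [eps4_swap01, eps4_swap12, eps4_swap01, eps4_swap23, eps4_swap12, eps4_swap01]; norm_num [eps4_0123]
@[simp] lemma eps3_021 : eps3 0 2 1 = -1 := by rw [eps3_swap12]; norm_num [eps3_012]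
@[simp] lemma eps3_102 : eps3 1 0 2 = -1 := by rw [eps3_swap01]; norm_num [eps3_012]
@[simp] lemma eps3_120 : eps3 1 2 0 = 1 := by rw [eps3_swap12, eps3_swap01]; norm_num [eps3_012]
@[simp] lemma eps3_201 : eps3 2 0 1 = 1 := by rw [eps3_swap01, eps3_swap12]; norm_num [eps3_012]
@[simp] lemma eps3_210 : eps3 2 1 0 = -1 := by rw [eps3_swap01, eps3_swap12, eps3_swap01]; norm_num [eps3_012]

def asm (a b c d e f : ℝ) : Matrix (Fin 4) (Fin 4) ℝ :=
  !![0, a, b, c; -a, 0, d, e; -b, -d, 0, f; -c, -e, -f, 0]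

noncomputable def sdual (M : Matrix (Fin 4) (Fin 4) ℝ) : Matrix (Fin 4) (Fin 4) ℝ :=
  Matrix.of fun μ ν => (1/2) * ∑ ρ, ∑ σ, eps4 μ ν ρ σ * M ρ σ

set_option maxRecDepth 10000 in
lemma sdual_asm (a b c d e f : ℝ) :
    sdual (asm a b c d e f) = asm f (-e) d c (-b) a := by
  ext μ ν
  fin_cases μ <;> fin_cases ν <;>
    (show (1/2) * ∑ ρ, ∑ σ, eps4 _ _ ρ σ * asm a b c d e f ρ σ = _
     simp [asm, Fin.sum_univ_four]) <;> ring

lemma antisym_repr (A : Matrix (Fin 4) (Fin 4) ℝ) (h : Aᵀ = -A) :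
    A = asm (A 0 1) (A 0 2) (A 0 3) (A 1 2) (A 1 3) (A 2 3) := by
  have h' : ∀ i j, A j i = -A i j := fun i j => by
    have := congrFun (congrFun h i) j
    simpa [Matrix.transpose_apply] using this
  have hd : ∀ i, A i i = 0 := fun i => by have := h' i i; linarith
  ext i j
  fin_cases i <;> fin_cases j <;>
    first | exact hd _ | exact h' _ _ | rfl

set_option maxRecDepth 40000 in
set_option maxHeartbeats 2000000 in
lemma wedge_asm (a b c d e f a' b' c' d' e' f' : ℝ) :
    (∑ μ, ∑ ν, ∑ ρ, ∑ σ, eps4 μ ν ρ σ * asm a b c d e f μ ν * asm a' b' c' d' e' f' ρ σ)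
      = 4 * (a*f' + a'*f - b*e' - b'*e + c*d' + c'*d) := by
  simp [asm, Fin.sum_univ_four]
  ring

set_option maxRecDepth 40000 in
set_option maxHeartbeats 2000000 in
lemma pf_mul (a b c d e f a' b' c' d' e' f' : ℝ) :
    asm a b c d e f * sdual (asm a' b' c' d' e' f')
      + asm a' b' c' d' e' f' * sdual (asm a b c d e f)
      = (-(a*f' + a'*f - b*e' - b'*e + c*d' + c'*d)) • (1 : Matrix (Fin 4) (Fin 4) ℝ) := by
  rw [sdual_asm, sdual_asm]
  ext i j
  fin_cases i <;> fin_cases j <;>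
    simp [asm, Matrix.mul_apply, Fin.sum_univ_four, Matrix.one_apply] <;> ring

set_option maxRecDepth 40000 in
set_option maxHeartbeats 2000000 in
lemma pf_mul' (a b c d e f a' b' c' d' e' f' : ℝ) :
    sdual (asm a b c d e f) * asm a' b' c' d' e' f'
      + sdual (asm a' b' c' d' e' f') * asm a b c d e f
      = (-(a*f' + a'*f - b*e' - b'*e + c*d' + c'*d)) • (1 : Matrix (Fin 4) (Fin 4) ℝ) := by
  rw [sdual_asm, sdual_asm]
  ext i j
  fin_cases i <;> fin_cases j <;>
    simp [asm, Matrix.mul_apply, Fin.sum_univ_four, Matrix.one_apply] <;> ring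

set_option maxRecDepth 40000 in
set_option maxHeartbeats 2000000 in
lemma collapse (M1 M2 M3 : Matrix (Fin 4) (Fin 4) ℝ) (X Y : Fin 4 → ℝ) (E : ℝ) :
    (∑ μ, ∑ ν, ∑ ρ, ∑ σ, ∑ α, ∑ β,
      E * eps4 μ ν ρ σ * X α * M1 α μ * Y β * M2 β ν * M3 ρ σ)
    = 2 * E * (X ⬝ᵥ ((M1 * sdual M3 * M2ᵀ) *ᵥ Y)) := by
  have h1 : ∀ (μ ν ρ σ : Fin 4),
      (∑ α, ∑ β, E * eps4 μ ν ρ σ * X α * M1 α μ * Y β * M2 β ν * M3 ρ σ)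
      = E * eps4 μ ν ρ σ * (∑ α, X α * M1 α μ) * (∑ β, Y β * M2 β ν) * M3 ρ σ := by
    intro μ ν ρ σ
    simp only [Fin.sum_univ_four]
    ring
  have h2 : ∀ (μ ν : Fin 4),
      (∑ ρ, ∑ σ, E * eps4 μ ν ρ σ * (∑ α, X α * M1 α μ) * (∑ β, Y β * M2 β ν) * M3 ρ σ)
      = E * (∑ α, X α * M1 α μ) * (∑ β, Y β * M2 β ν) * (2 * sdual M3 μ ν) := by
    intro μ ν
    simp only [sdual, Matrix.of_apply, Fin.sum_univ_four]
    ring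
  calc (∑ μ, ∑ ν, ∑ ρ, ∑ σ, ∑ α, ∑ β,
      E * eps4 μ ν ρ σ * X α * M1 α μ * Y β * M2 β ν * M3 ρ σ)
      = ∑ μ, ∑ ν, ∑ ρ, ∑ σ,
        E * eps4 μ ν ρ σ * (∑ α, X α * M1 α μ) * (∑ β, Y β * M2 β ν) * M3 ρ σ :=
        Finset.sum_congr rfl fun μ _ => Finset.sum_congr rfl fun ν _ =>
          Finset.sum_congr rfl fun ρ _ => Finset.sum_congr rfl fun σ _ => h1 μ ν ρ σ
    _ = ∑ μ, ∑ ν, E * (∑ α, X α * M1 α μ) * (∑ β, Y β * M2 β ν) * (2 * sdual M3 μ ν) :=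
        Finset.sum_congr rfl fun μ _ => Finset.sum_congr rfl fun ν _ => h2 μ ν
    _ = 2 * E * (X ⬝ᵥ ((M1 * sdual M3 * M2ᵀ) *ᵥ Y)) := by
        simp only [Matrix.mulVec, Matrix.mul_apply, dotProduct, Matrix.transpose_apply,
          Fin.sum_univ_four]
        ring

lemma urbantke_expand (v : ℝ) (Sig : Fin 3 → Matrix (Fin 4) (Fin 4) ℝ) (X Y : Fin 4 → ℝ) :
    urbantke v Sig X Y = -(1 / (12 * v)) * ∑ i, ∑ j, ∑ k,
      2 * eps3 i j k * (X ⬝ᵥ ((Sig i * sdual (Sig k) * (Sig j)ᵀ) *ᵥ Y)) := by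
  unfold urbantke
  congr 1
  exact Finset.sum_congr rfl fun i _ => Finset.sum_congr rfl fun j _ =>
    Finset.sum_congr rfl fun k _ => collapse (Sig i) (Sig j) (Sig k) X Y (eps3 i j k)

lemma dot_repr (M : Matrix (Fin 4) (Fin 4) ℝ) (X Y : Fin 4 → ℝ) :
    (∑ μ, ∑ ν, M μ ν * X μ * Y ν) = X ⬝ᵥ (M *ᵥ Y) := by
  simp only [dotProduct, Matrix.mulVec, Finset.mul_sum]
  exact Finset.sum_congr rfl fun μ _ => Finset.sum_congr rfl fun ν _ => by ring

lemma cs_aux (a b : ℝ) (ha : 0 ≤ a) (h : ∀ t : ℝ, 0 ≤ t*t*a + 2*t*b) : b = 0 := by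
  by_contra hb
  have ha1 : 0 < a + 1 := by linarith
  have ht := h (-b/(a+1))
  have hb2 : 0 < b^2 := by positivity
  have e : (-b/(a+1))*(-b/(a+1))*a + 2*(-b/(a+1))*b
      = (b^2*a - 2*b^2*(a+1))/((a+1)^2) := by field_simp; ring
  rw [e] at ht
  have h2 : 0 ≤ b^2*a - 2*b^2*(a+1) := by
    have h3 := mul_nonneg ht (le_of_lt (pow_pos ha1 2))
    rwa [div_mul_cancel₀] at h3
    exact ne_of_gt (pow_pos ha1 2)
  nlinarith

set_option maxHeartbeats 2000000 in
lemma asm_transpose (a b c d e f : ℝ) : (asm a b c d e f)ᵀ = -asm a b c d e f := by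
  ext i j
  fin_cases i <;> fin_cases j <;> simp [asm]

/-- the Urbantke formula produces a symmetric positive-definite
bilinear form from an oriented `SU(2)`-structure. -/
theorem urbantke_metric_pos_def
    (Sig : Fin 3 → Matrix (Fin 4) (Fin 4) ℝ)
    (hanti : ∀ i, (Sig i)ᵀ = -Sig i)
    (v : ℝ) (hv : v ≠ 0)
    (hwedge : ∀ i j, (∑ μ, ∑ ν, ∑ ρ, ∑ σ, eps4 μ ν ρ σ * Sig i μ ν * Sig j ρ σ)
      = 8 * v * (if i = j then 1 else 0))
    (horient : ∀ X Y : Fin 4 → ℝ,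
      (∀ ν, (∑ μ, X μ * Sig 0 μ ν) = ∑ μ, Y μ * Sig 1 μ ν) →
      (∑ μ, ∑ ν, Sig 2 μ ν * X μ * Y ν) ≤ 0) :
    (∀ X Y, urbantke v Sig X Y = urbantke v Sig Y X) ∧
    (∀ X X' Y, urbantke v Sig (X + X') Y = urbantke v Sig X Y + urbantke v Sig X' Y) ∧
    (∀ (c : ℝ) X Y, urbantke v Sig (c • X) Y = c * urbantke v Sig X Y) ∧
    (∀ X, X ≠ 0 → 0 < urbantke v Sig X X) := by
  have repr : ∀ i, Sig i = asm (Sig i 0 1) (Sig i 0 2) (Sig i 0 3)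
      (Sig i 1 2) (Sig i 1 3) (Sig i 2 3) := fun i => antisym_repr _ (hanti i)
  -- the fundamental algebraic relations
  have hrel : ∀ i j, Sig i * sdual (Sig j) + Sig j * sdual (Sig i)
      = (-(2 * v * (if i = j then 1 else 0))) • (1 : Matrix (Fin 4) (Fin 4) ℝ) := by
    intro i j
    have hw := hwedge i j
    rw [repr i, repr j] at hw
    rw [wedge_asm] at hw
    rw [repr i, repr j, pf_mul]
    congr 1
    linear_combination (-1/4 : ℝ) * hw
  have hrelL : ∀ i j, sdual (Sig i) * Sig j + sdual (Sig j) * Sig i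
      = (-(2 * v * (if i = j then 1 else 0))) • (1 : Matrix (Fin 4) (Fin 4) ℝ) := by
    intro i j
    have hw := hwedge i j
    rw [repr i, repr j] at hw
    rw [wedge_asm] at hw
    rw [repr i, repr j, pf_mul']
    congr 1
    linear_combination (-1/4 : ℝ) * hw
  -- diagonal relations
  have hdiag : ∀ i, Sig i * sdual (Sig i) = (-v) • (1 : Matrix (Fin 4) (Fin 4) ℝ) := by
    intro i
    have h := hrel i i
    rw [if_pos rfl] at h
    have h2 : (2:ℝ) • (Sig i * sdual (Sig i))
        = ((-(2 * v * 1)) • 1 : Matrix (Fin 4) (Fin 4) ℝ) := by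
      rw [two_smul]; exact h
    calc Sig i * sdual (Sig i)
        = (2⁻¹ : ℝ) • ((2:ℝ) • (Sig i * sdual (Sig i))) := by
          rw [smul_smul]; norm_num
      _ = (2⁻¹ : ℝ) • ((-(2 * v * 1)) • (1 : Matrix (Fin 4) (Fin 4) ℝ)) := by rw [h2]
      _ = (-v) • 1 := by rw [smul_smul]; congr 1; ring
  have hdiagL : ∀ i, sdual (Sig i) * Sig i = (-v) • (1 : Matrix (Fin 4) (Fin 4) ℝ) := by
    intro i
    have h := hrelL i i
    rw [if_pos rfl] at h
    have h2 : (2:ℝ) • (sdual (Sig i) * Sig i)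
        = ((-(2 * v * 1)) • 1 : Matrix (Fin 4) (Fin 4) ℝ) := by
      rw [two_smul]; exact h
    calc sdual (Sig i) * Sig i
        = (2⁻¹ : ℝ) • ((2:ℝ) • (sdual (Sig i) * Sig i)) := by
          rw [smul_smul]; norm_num
      _ = (2⁻¹ : ℝ) • ((-(2 * v * 1)) • (1 : Matrix (Fin 4) (Fin 4) ℝ)) := by rw [h2]
      _ = (-v) • 1 := by rw [smul_smul]; congr 1; ring
  -- off-diagonal relations
  have hAB : ∀ i j, i ≠ j → Sig i * sdual (Sig j) = -(Sig j * sdual (Sig i)) := by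
    intro i j hij
    have h := hrel i j
    rw [if_neg hij] at h
    have h0 : Sig i * sdual (Sig j) + Sig j * sdual (Sig i) = 0 := by
      rw [h]; simp
    exact eq_neg_of_add_eq_zero_left h0
  have hBA : ∀ i j, i ≠ j → sdual (Sig i) * Sig j = -(sdual (Sig j) * Sig i) := by
    intro i j hij
    have h := hrelL i j
    rw [if_neg hij] at h
    have h0 : sdual (Sig i) * Sig j + sdual (Sig j) * Sig i = 0 := by
      rw [h]; simp
    exact eq_neg_of_add_eq_zero_left h0
  -- the W identities
  have w012 : Sig 0 * sdual (Sig 1) * Sig 2 = -(Sig 0 * sdual (Sig 2) * Sig 1) := by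
    rw [mul_assoc, hBA 1 2 (by decide), mul_neg, ← mul_assoc]
  have w102 : Sig 1 * sdual (Sig 0) * Sig 2 = Sig 0 * sdual (Sig 2) * Sig 1 := by
    rw [hAB 1 0 (by decide), neg_mul, w012, neg_neg]
  have w120 : Sig 1 * sdual (Sig 2) * Sig 0 = -(Sig 0 * sdual (Sig 2) * Sig 1) := by
    rw [hAB 1 2 (by decide), neg_mul, mul_assoc, hBA 1 0 (by decide), mul_neg, neg_neg,
      ← mul_assoc, hAB 2 0 (by decide), neg_mul]
  have w210 : Sig 2 * sdual (Sig 1) * Sig 0 = Sig 0 * sdual (Sig 2) * Sig 1 := by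
    rw [hAB 2 1 (by decide), neg_mul, w120, neg_neg]
  have w201 : Sig 2 * sdual (Sig 0) * Sig 1 = -(Sig 0 * sdual (Sig 2) * Sig 1) := by
    rw [hAB 2 0 (by decide), neg_mul]
  -- symmetry of N
  have hBanti : ∀ i, (sdual (Sig i))ᵀ = -sdual (Sig i) := by
    intro i
    rw [repr i, sdual_asm, asm_transpose]
  have nsym : (Sig 0 * sdual (Sig 2) * Sig 1)ᵀ = Sig 0 * sdual (Sig 2) * Sig 1 := by
    rw [Matrix.transpose_mul, Matrix.transpose_mul, hanti 1, hanti 0, hBanti 2]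
    have h : (-Sig 1) * ((-sdual (Sig 2)) * (-Sig 0))
        = -(Sig 1 * sdual (Sig 2) * Sig 0) := by noncomm_ring
    rw [h, w120, neg_neg]
  -- the Urbantke metric in closed form
  have gform : ∀ X Y, urbantke v Sig X Y
      = (1/v) * (X ⬝ᵥ ((Sig 0 * sdual (Sig 2) * Sig 1) *ᵥ Y)) := by
    intro X Y
    rw [urbantke_expand]
    simp only [Fin.sum_univ_three, eps3_012, eps3_021, eps3_102, eps3_120, eps3_201, eps3_210,
      eps3_diag01, eps3_diag02, eps3_diag12, mul_zero, zero_mul, mul_one, add_zero, zero_add,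
      mul_neg, neg_mul]
    rw [hanti 0, hanti 1, hanti 2]
    simp only [Matrix.mul_neg, Matrix.neg_mul]  -- ?? bring to -(A i * B k * A j) form
    rw [w012, w102, w120, w210, w201]
    simp only [Matrix.neg_mulVec, Matrix.mulVec_neg, dotProduct_neg, neg_neg]
    field_simp
    ring
  -- symmetry of the scalar form
  have nsymS : ∀ X Y : Fin 4 → ℝ, X ⬝ᵥ ((Sig 0 * sdual (Sig 2) * Sig 1) *ᵥ Y)
      = Y ⬝ᵥ ((Sig 0 * sdual (Sig 2) * Sig 1) *ᵥ X) := by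
    intro X Y
    rw [Matrix.dotProduct_mulVec, ← Matrix.mulVec_transpose, nsym, dotProduct_comm]
  -- invertibility
  have hdet : IsUnit (Sig 0 * sdual (Sig 2) * Sig 1).det := by
    have hv4 : v^4 ≠ 0 := pow_ne_zero _ hv
    have d0 : (Sig 0).det * (sdual (Sig 0)).det = v^4 := by
      have h := congrArg Matrix.det (hdiag 0)
      rw [Matrix.det_mul, Matrix.det_smul, Matrix.det_one] at h
      calc (Sig 0).det * (sdual (Sig 0)).det = (-v)^4 := by
            simpa [Fintype.card_fin] using h
        _ = v^4 := by ring
    have d1 : (Sig 1).det * (sdual (Sig 1)).det = v^4 := by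
      have h := congrArg Matrix.det (hdiag 1)
      rw [Matrix.det_mul, Matrix.det_smul, Matrix.det_one] at h
      calc (Sig 1).det * (sdual (Sig 1)).det = (-v)^4 := by
            simpa [Fintype.card_fin] using h
        _ = v^4 := by ring
    have dB2 : (sdual (Sig 2)).det * (Sig 2).det = v^4 := by
      have h := congrArg Matrix.det (hdiagL 2)
      rw [Matrix.det_mul, Matrix.det_smul, Matrix.det_one] at h
      calc (sdual (Sig 2)).det * (Sig 2).det = (-v)^4 := by
            simpa [Fintype.card_fin] using h
        _ = v^4 := by ring
    have h0 : (Sig 0).det ≠ 0 := fun h => hv4 (by rw [← d0, h, zero_mul])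
    have h1 : (Sig 1).det ≠ 0 := fun h => hv4 (by rw [← d1, h]; ring)
    have h2 : (sdual (Sig 2)).det ≠ 0 := fun h => hv4 (by rw [← dB2, h, zero_mul])
    rw [Matrix.det_mul, Matrix.det_mul]
    exact (mul_ne_zero (mul_ne_zero h0 h2) h1).isUnit
  have hNinj : ∀ X : Fin 4 → ℝ, (Sig 0 * sdual (Sig 2) * Sig 1) *ᵥ X = 0 → X = 0 := by
    intro X hX0
    have h := congrArg (fun w => (Sig 0 * sdual (Sig 2) * Sig 1)⁻¹ *ᵥ w) hX0
    simp only [Matrix.mulVec_mulVec, Matrix.mulVec_zero] at h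
    rwa [Matrix.nonsing_inv_mul _ hdet, Matrix.one_mulVec] at h
  -- positive semidefiniteness from the orientation hypothesis
  have psd : ∀ X, 0 ≤ urbantke v Sig X X := by
    intro X
    have hprem : ∀ ν, (∑ μ, X μ * Sig 0 μ ν)
        = ∑ μ, ((-(1/v)) • (sdual (Sig 1) *ᵥ (Sig 0 *ᵥ X))) μ * Sig 1 μ ν := by
      have hvec : ((-(1/v)) • (sdual (Sig 1) *ᵥ (Sig 0 *ᵥ X))) ᵥ* (Sig 1) = X ᵥ* (Sig 0) := by
        rw [← Matrix.mulVec_transpose, ← Matrix.mulVec_transpose, hanti 0, hanti 1,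
          Matrix.mulVec_smul, Matrix.neg_mulVec, Matrix.mulVec_mulVec, hdiag 1,
          Matrix.smul_mulVec, Matrix.one_mulVec, Matrix.neg_mulVec, smul_neg,
          smul_smul]
        try rw [show (-(1/v) * -v : ℝ) = 1 by field_simp, one_smul]
      intro ν
      have h := congrFun hvec ν
      simpa [Matrix.vecMul, dotProduct] using h.symm
    have hor := horient X _ hprem
    rw [dot_repr] at hor
    have hmat : Sig 2 *ᵥ ((-(1/v)) • (sdual (Sig 1) *ᵥ (Sig 0 *ᵥ X)))
        = (-(1/v)) • ((Sig 0 * sdual (Sig 2) * Sig 1) *ᵥ X) := by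
      rw [Matrix.mulVec_smul, Matrix.mulVec_mulVec, Matrix.mulVec_mulVec, w210]
    rw [hmat, dotProduct_smul] at hor
    rw [gform]
    have : -(1/v) • (X ⬝ᵥ ((Sig 0 * sdual (Sig 2) * Sig 1) *ᵥ X))
        = -((1/v) * (X ⬝ᵥ ((Sig 0 * sdual (Sig 2) * Sig 1) *ᵥ X))) := by
      simp [smul_eq_mul]
      try ring
    rw [this] at hor
    linarith
  refine ⟨?_, ?_, ?_, ?_⟩
  · intro X Y
    rw [gform, gform, nsymS]
  · intro X X' Y
    rw [gform, gform, gform, add_dotProduct]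
    ring
  · intro c X Y
    rw [gform, gform, smul_dotProduct]
    simp [smul_eq_mul]
    ring
  · intro X hX
    rcases lt_or_eq_of_le (psd X) with h | h
    · exact h
    · exfalso
      have hs0 : X ⬝ᵥ ((Sig 0 * sdual (Sig 2) * Sig 1) *ᵥ X) = 0 := by
        have h' := h.symm
        rw [gform] at h'
        rcases mul_eq_zero.mp h' with h'' | h''
        · exact absurd h'' (by positivity)
        · exact h''
      have hq : ∀ t : ℝ, 0 ≤ t*t*(urbantke v Sig ((Sig 0 * sdual (Sig 2) * Sig 1) *ᵥ X)
            ((Sig 0 * sdual (Sig 2) * Sig 1) *ᵥ X))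
          + 2*t*((1/v)*(X ⬝ᵥ ((Sig 0 * sdual (Sig 2) * Sig 1) *ᵥ
            ((Sig 0 * sdual (Sig 2) * Sig 1) *ᵥ X)))) := by
        intro t
        have hp := psd (X + t • ((Sig 0 * sdual (Sig 2) * Sig 1) *ᵥ X))
        rw [gform] at hp
        rw [gform]
        have hexp : (X + t • ((Sig 0 * sdual (Sig 2) * Sig 1) *ᵥ X)) ⬝ᵥ
            ((Sig 0 * sdual (Sig 2) * Sig 1) *ᵥ
              (X + t • ((Sig 0 * sdual (Sig 2) * Sig 1) *ᵥ X)))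
            = X ⬝ᵥ ((Sig 0 * sdual (Sig 2) * Sig 1) *ᵥ X)
            + t*(X ⬝ᵥ ((Sig 0 * sdual (Sig 2) * Sig 1) *ᵥ
                (((Sig 0 * sdual (Sig 2) * Sig 1) *ᵥ X))))
            + t*((((Sig 0 * sdual (Sig 2) * Sig 1) *ᵥ X)) ⬝ᵥ
                ((Sig 0 * sdual (Sig 2) * Sig 1) *ᵥ X))
            + t*t*((((Sig 0 * sdual (Sig 2) * Sig 1) *ᵥ X)) ⬝ᵥ
                ((Sig 0 * sdual (Sig 2) * Sig 1) *ᵥ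
                  (((Sig 0 * sdual (Sig 2) * Sig 1) *ᵥ X)))) := by
          rw [Matrix.mulVec_add, Matrix.mulVec_smul, dotProduct_add,
            add_dotProduct, add_dotProduct, dotProduct_smul,
            smul_dotProduct, smul_dotProduct, dotProduct_smul]
          simp only [smul_eq_mul]
          ring
        rw [hexp, hs0] at hp
        have hsy : (((Sig 0 * sdual (Sig 2) * Sig 1) *ᵥ X)) ⬝ᵥ
            ((Sig 0 * sdual (Sig 2) * Sig 1) *ᵥ X)
            = X ⬝ᵥ ((Sig 0 * sdual (Sig 2) * Sig 1) *ᵥ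
              (((Sig 0 * sdual (Sig 2) * Sig 1) *ᵥ X))) :=
          nsymS ((Sig 0 * sdual (Sig 2) * Sig 1) *ᵥ X) X
        rw [hsy] at hp
        ring_nf at hp ⊢
        linarith [hp]
      have hb0 := cs_aux _ _ (psd _) hq
      have hdv : (1/v : ℝ) ≠ 0 := one_div_ne_zero hv
      have hZ : X ⬝ᵥ ((Sig 0 * sdual (Sig 2) * Sig 1) *ᵥ
          (((Sig 0 * sdual (Sig 2) * Sig 1) *ᵥ X))) = 0 := by
        rcases mul_eq_zero.mp hb0 with h'' | h''
        · exact absurd h'' hdv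
        · exact h''
      have hZZ : ((Sig 0 * sdual (Sig 2) * Sig 1) *ᵥ X) ⬝ᵥ
          ((Sig 0 * sdual (Sig 2) * Sig 1) *ᵥ X) = 0 := by
        rw [← hZ, Matrix.dotProduct_mulVec, ← Matrix.mulVec_transpose, nsym,
          dotProduct_comm]
      have hZzero : (Sig 0 * sdual (Sig 2) * Sig 1) *ᵥ X = 0 :=
        dotProduct_self_eq_zero.mp hZZ
      exact hX (hNinj X hZzero)
end

section
/- Let V be the 12-dimensional real vector space of triples A = (A¹, A², A³) of vectors in ℝ⁴, and define the linear operator J₁ : V → V by J₁(A)ⁱ := ∑_{j,k} ε^{ijk} Sʲ A^k (matrix–vector products). Then J₁ ∘ J₁ = 2·id_V + J₁. Consequently J₁ is invertible with inverse J₁⁻¹ = (1/2)(J₁ − id_V). -/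
open Matrix BigOperators

/-- The canonical matrices `S¹, S², S³`. -/
def Scan : Fin 3 → Matrix (Fin 4) (Fin 4) ℝ :=
  ![!![0, 0, 0, -1; 0, 0, -1, 0; 0, 1, 0, 0; 1, 0, 0, 0],
    !![0, 0, 1, 0; 0, 0, 0, -1; -1, 0, 0, 0; 0, 1, 0, 0],
    !![0, -1, 0, 0; 1, 0, 0, 0; 0, 0, 0, -1; 0, 0, 1, 0]]

/-- The operator `J₁` on triples of vectors in `ℝ⁴`:
`J₁(A)ⁱ = ∑_{jk} ε^{ijk} Sʲ Aᵏ`. -/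
noncomputable def J1 (A : Fin 3 → Fin 4 → ℝ) : Fin 3 → Fin 4 → ℝ :=
  fun i => ∑ j, ∑ k, eps3 i j k • (Scan j).mulVec (A k)


lemma eps3_eq (i j k : Fin 3) : eps3 i j k =
    ![![![0,0,0],![0,0,1],![0,-1,0]],
      ![![0,0,-1],![0,0,0],![1,0,0]],
      ![![0,1,0],![-1,0,0],![0,0,0]]] i j k := by
  fin_cases i <;> fin_cases j <;> fin_cases k <;>
    simp [eps3, Matrix.det_fin_three]

lemma J1_apply (A : Fin 3 → Fin 4 → ℝ) : J1 A =
    ![(Scan 1).mulVec (A 2) - (Scan 2).mulVec (A 1),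
      (Scan 2).mulVec (A 0) - (Scan 0).mulVec (A 2),
      (Scan 0).mulVec (A 1) - (Scan 1).mulVec (A 0)] := by
  funext i x
  fin_cases i <;>
    simp [J1, eps3_eq, Fin.sum_univ_three, neg_smul, Matrix.vecHead, Matrix.vecTail] <;> ring

set_option maxHeartbeats 1600000 in
lemma key (A : Fin 3 → Fin 4 → ℝ) : J1 (J1 A) = (2 : ℝ) • A + J1 A := by
  funext i x
  fin_cases i <;> fin_cases x <;>
    simp [J1_apply, Scan, Matrix.mulVec, dotProduct, Fin.sum_univ_four,
      Matrix.vecHead, Matrix.vecTail] <;> ring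

set_option maxHeartbeats 1600000 in
lemma J1_smul (c : ℝ) (A : Fin 3 → Fin 4 → ℝ) : J1 (c • A) = c • J1 A := by
  funext i x
  fin_cases i <;> fin_cases x <;>
    simp [J1_apply, Matrix.mulVec, dotProduct, Fin.sum_univ_four,
      Scan, Matrix.vecHead, Matrix.vecTail] <;> ring

set_option maxHeartbeats 1600000 in
lemma J1_sub (A B : Fin 3 → Fin 4 → ℝ) : J1 (A - B) = J1 A - J1 B := by
  funext i x
  fin_cases i <;> fin_cases x <;>
    simp [J1_apply, Matrix.mulVec, dotProduct, Fin.sum_univ_four,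
      Scan, Matrix.vecHead, Matrix.vecTail] <;> ring

/-- `J₁² = 2·id + J₁`; consequently `J₁` is invertible with
inverse `(1/2)(J₁ − id)`. -/
theorem J1_quadratic_and_inverse :
    (∀ A : Fin 3 → Fin 4 → ℝ, J1 (J1 A) = (2 : ℝ) • A + J1 A) ∧
    (∀ A : Fin 3 → Fin 4 → ℝ, J1 ((1 / 2 : ℝ) • (J1 A - A)) = A) ∧
    (∀ A : Fin 3 → Fin 4 → ℝ, (1 / 2 : ℝ) • (J1 (J1 A) - J1 A) = A) := by
  refine ⟨key, fun A => ?_, fun A => ?_⟩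
  · rw [J1_smul, J1_sub, key]
    funext i x
    simp
  · rw [key]
    funext i x
    simp
end

section
/- Let R : {1,2,3,4}⁴ → ℝ be an algebraic curvature tensor, i.e. R_{μνρσ} = −R_{νμρσ}, R_{μνρσ} = −R_{μνσρ}, R_{μνρσ} = R_{ρσμν}, and R_{μνρσ} + R_{μρσν} + R_{μσνρ} = 0 for all indices. Define the Ricci tensor Ric_{μν} := ∑_α R_{μανα}. Then for all μ, ν: ∑_{i=1}^{3} ∑_{α,ρ,σ} Sⁱ_{μα} R_{ανρσ} Sⁱ_{ρσ} = −2 Ric_{μν}. -/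
set_option maxHeartbeats 4000000
set_option maxRecDepth 20000


open Matrix BigOperators

/-- for any algebraic curvature tensor `R`,
`∑ᵢ Sⁱ_{μα} R_{ανρσ} Sⁱ_{ρσ} = −2 Ric_{μν}`. -/
theorem ricci_from_selfdual_curvature
    (R : Fin 4 → Fin 4 → Fin 4 → Fin 4 → ℝ)
    (hA1 : ∀ μ ν ρ σ, R μ ν ρ σ = -R ν μ ρ σ)
    (hA2 : ∀ μ ν ρ σ, R μ ν ρ σ = -R μ ν σ ρ)
    (hPair : ∀ μ ν ρ σ, R μ ν ρ σ = R ρ σ μ ν)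
    (hBianchi : ∀ μ ν ρ σ, R μ ν ρ σ + R μ ρ σ ν + R μ σ ν ρ = 0) :
    ∀ μ ν, (∑ i, ∑ α, ∑ ρ, ∑ σ, Scan i μ α * R α ν ρ σ * Scan i ρ σ)
      = -2 * (∑ α, R μ α ν α) := by
  intro μ ν
  fin_cases μ <;> fin_cases ν <;>
    simp only [Scan, Fin.sum_univ_four, Fin.sum_univ_three, Fin.isValue, Fin.reduceFinMk,
      Matrix.of_apply, Matrix.cons_val', Matrix.cons_val_zero, Matrix.cons_val_one,
      Matrix.head_cons, Matrix.cons_val_two, Matrix.tail_cons, Matrix.cons_val_three,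
      Matrix.empty_val', Matrix.cons_val_fin_one, Matrix.head_fin_const,
      mul_zero, zero_mul, mul_one, one_mul, mul_neg, neg_mul, add_zero, zero_add,
      neg_zero, neg_neg, neg_add_rev]
  · linear_combination (1) * (hA1 0 1 0 1) + (-1) * (hA1 0 1 1 0) + (1) * (hA1 0 1 2 3) + (-1) * (hA1 0 1 3 2) + (1) * (hA1 0 2 0 2) + (-1) * (hA1 0 2 1 3) + (-1) * (hA1 0 2 2 0) + (1) * (hA1 0 2 3 1) + (1) * (hA1 0 3 0 3) + (1) * (hA1 0 3 1 2) + (-1) * (hA1 0 3 2 1) + (-1) * (hA1 0 3 3 0) + (1) * (hA2 0 1 0 1) + (1) * (hA2 0 2 0 2) + (1) * (hA2 0 3 0 3) + (1) * (hA2 0 3 1 2) + (1) * (hA2 0 2 1 3) + (1) * (hA2 0 1 2 3) + (2/3) * (hBianchi 0 0 0 0) + (-2) * (hBianchi 0 1 2 3)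
  · linear_combination (1) * (hA1 1 2 0 2) + (-1) * (hA1 1 2 1 3) + (-1) * (hA1 1 2 2 0) + (1) * (hA1 1 2 3 1) + (1) * (hA1 1 3 0 3) + (1) * (hA1 1 3 1 2) + (-1) * (hA1 1 3 2 1) + (-1) * (hA1 1 3 3 0) + (4) * (hA2 0 0 0 1) + (-1) * (hA2 1 1 0 1) + (1) * (hA2 1 2 0 2) + (1) * (hA2 1 3 0 3) + (1) * (hA2 1 3 1 2) + (-3) * (hA2 1 2 1 3) + (-1) * (hA2 1 1 2 3) + (-2) * (hPair 0 0 0 1) + (-2) * (hPair 0 1 1 1) + (2) * (hPair 0 2 1 2) + (2) * (hPair 0 3 1 3) + (4) * (hPair 1 2 1 3) + (-2) * (hBianchi 0 0 0 1) + (4/3) * (hBianchi 0 1 1 1) + (2) * (hBianchi 1 1 2 3)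
  · linear_combination (1) * (hA1 2 3 0 3) + (1) * (hA1 2 3 1 2) + (-1) * (hA1 2 3 2 1) + (-1) * (hA1 2 3 3 0) + (-1) * (hA2 1 2 0 1) + (4) * (hA2 0 0 0 2) + (-1) * (hA2 2 2 0 2) + (1) * (hA2 2 3 0 3) + (2) * (hA2 0 1 1 2) + (1) * (hA2 2 3 1 2) + (1) * (hA2 2 2 1 3) + (1) * (hA2 1 2 2 3) + (-2) * (hPair 0 0 0 2) + (-2) * (hPair 0 1 1 2) + (-2) * (hPair 0 2 2 2) + (2) * (hPair 0 3 2 3) + (2) * (hPair 1 2 2 3) + (2) * (hPair 1 3 2 2) + (-2) * (hBianchi 0 0 0 2) + (4/3) * (hBianchi 0 2 2 2) + (-2) * (hBianchi 1 2 2 3)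
  · linear_combination (-1) * (hA2 1 3 0 1) + (-1) * (hA2 2 3 0 2) + (4) * (hA2 0 0 0 3) + (-1) * (hA2 3 3 0 3) + (-1) * (hA2 3 3 1 2) + (2) * (hA2 0 1 1 3) + (1) * (hA2 2 3 1 3) + (2) * (hA2 0 2 2 3) + (-3) * (hA2 1 3 2 3) + (-2) * (hPair 0 0 0 3) + (-2) * (hPair 0 1 1 3) + (-2) * (hPair 0 2 2 3) + (-2) * (hPair 0 3 3 3) + (-2) * (hPair 1 2 3 3) + (2) * (hPair 1 3 2 3) + (-2) * (hBianchi 0 0 0 3) + (4/3) * (hBianchi 0 3 3 3) + (2) * (hBianchi 1 2 3 3)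
  · linear_combination (2) * (hA1 0 1 0 0) + (1) * (hA1 0 2 0 3) + (1) * (hA1 0 2 1 2) + (-1) * (hA1 0 2 2 1) + (-1) * (hA1 0 2 3 0) + (-1) * (hA1 0 3 0 2) + (1) * (hA1 0 3 1 3) + (1) * (hA1 0 3 2 0) + (-1) * (hA1 0 3 3 1) + (5) * (hA2 0 0 0 1) + (-1) * (hA2 0 3 0 2) + (3) * (hA2 0 2 0 3) + (1) * (hA2 0 2 1 2) + (1) * (hA2 0 3 1 3) + (1) * (hA2 0 0 2 3) + (-2) * (hPair 0 0 0 1) + (-2) * (hPair 0 1 1 1) + (-4) * (hPair 0 2 0 3) + (-2) * (hPair 0 2 1 2) + (-2) * (hPair 0 3 1 3) + (-4) * (hBianchi 0 0 0 1) + (-2) * (hBianchi 0 0 2 3) + (2/3) * (hBianchi 0 1 1 1)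
  · linear_combination (2) * (hA1 0 1 1 0) + (1) * (hA1 1 2 0 3) + (1) * (hA1 1 2 1 2) + (-1) * (hA1 1 2 2 1) + (-1) * (hA1 1 2 3 0) + (-1) * (hA1 1 3 0 2) + (1) * (hA1 1 3 1 3) + (1) * (hA1 1 3 2 0) + (-1) * (hA1 1 3 3 1) + (-1) * (hA2 0 1 0 1) + (-1) * (hA2 1 3 0 2) + (1) * (hA2 1 2 0 3) + (1) * (hA2 1 2 1 2) + (2) * (hA2 0 2 1 3) + (1) * (hA2 1 3 1 3) + (1) * (hA2 0 1 2 3) + (-2) * (hPair 0 2 1 3) + (2) * (hPair 0 3 1 2) + (-2) * (hBianchi 0 1 2 3) + (2/3) * (hBianchi 1 1 1 1)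
  · linear_combination (2) * (hA1 0 1 2 0) + (-1) * (hA1 2 3 0 2) + (1) * (hA1 2 3 1 3) + (1) * (hA1 2 3 2 0) + (-1) * (hA1 2 3 3 1) + (1) * (hA2 0 2 0 1) + (-2) * (hA2 0 1 0 2) + (-1) * (hA2 2 3 0 2) + (-1) * (hA2 2 2 0 3) + (4) * (hA2 1 1 1 2) + (-1) * (hA2 2 2 1 2) + (1) * (hA2 2 3 1 3) + (-1) * (hA2 0 2 2 3) + (2) * (hPair 0 1 0 2) + (-2) * (hPair 0 2 2 3) + (-2) * (hPair 0 3 2 2) + (-2) * (hPair 1 1 1 2) + (-2) * (hPair 1 2 2 2) + (2) * (hPair 1 3 2 3) + (2) * (hBianchi 0 2 2 3) + (-2) * (hBianchi 1 1 1 2) + (4/3) * (hBianchi 1 2 2 2)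
  · linear_combination (2) * (hA1 0 1 3 0) + (1) * (hA2 0 3 0 1) + (1) * (hA2 3 3 0 2) + (-2) * (hA2 0 1 0 3) + (-1) * (hA2 2 3 0 3) + (-1) * (hA2 2 3 1 2) + (4) * (hA2 1 1 1 3) + (-1) * (hA2 3 3 1 3) + (3) * (hA2 0 3 2 3) + (2) * (hA2 1 2 2 3) + (2) * (hPair 0 1 0 3) + (2) * (hPair 0 2 3 3) + (-2) * (hPair 0 3 2 3) + (-2) * (hPair 1 1 1 3) + (-2) * (hPair 1 2 2 3) + (-2) * (hPair 1 3 3 3) + (-2) * (hBianchi 0 2 3 3) + (-2) * (hBianchi 1 1 1 3) + (4/3) * (hBianchi 1 3 3 3)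
  · linear_combination (-1) * (hA1 0 1 0 3) + (-1) * (hA1 0 1 1 2) + (1) * (hA1 0 1 2 1) + (1) * (hA1 0 1 3 0) + (2) * (hA1 0 2 0 0) + (1) * (hA1 0 3 0 1) + (-1) * (hA1 0 3 1 0) + (1) * (hA1 0 3 2 3) + (-1) * (hA1 0 3 3 2) + (2) * (hA1 1 2 0 1) + (1) * (hA2 0 3 0 1) + (5) * (hA2 0 0 0 2) + (-3) * (hA2 0 1 0 3) + (-1) * (hA2 0 1 1 2) + (-1) * (hA2 0 0 1 3) + (1) * (hA2 0 3 2 3) + (-2) * (hPair 0 0 0 2) + (4) * (hPair 0 1 0 3) + (2) * (hPair 0 1 1 2) + (-2) * (hPair 0 2 2 2) + (-2) * (hPair 0 3 2 3) + (-4) * (hBianchi 0 0 0 2) + (2) * (hBianchi 0 0 1 3) + (2/3) * (hBianchi 0 2 2 2)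
  · linear_combination (2) * (hA1 0 2 1 0) + (2) * (hA1 1 2 1 1) + (1) * (hA1 1 3 0 1) + (-1) * (hA1 1 3 1 0) + (1) * (hA1 1 3 2 3) + (-1) * (hA1 1 3 3 2) + (-2) * (hA2 0 2 0 1) + (1) * (hA2 1 3 0 1) + (1) * (hA2 0 1 0 2) + (1) * (hA2 1 1 0 3) + (5) * (hA2 1 1 1 2) + (1) * (hA2 0 1 1 3) + (1) * (hA2 1 3 2 3) + (-2) * (hPair 0 1 0 2) + (2) * (hPair 0 1 1 3) + (2) * (hPair 0 3 1 1) + (-2) * (hPair 1 1 1 2) + (-2) * (hPair 1 2 2 2) + (-2) * (hPair 1 3 2 3) + (-2) * (hBianchi 0 1 1 3) + (-4) * (hBianchi 1 1 1 2) + (2/3) * (hBianchi 1 2 2 2)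
  · linear_combination (2) * (hA1 0 2 2 0) + (2) * (hA1 1 2 2 1) + (1) * (hA1 2 3 0 1) + (-1) * (hA1 2 3 1 0) + (1) * (hA1 2 3 2 3) + (-1) * (hA1 2 3 3 2) + (1) * (hA2 2 3 0 1) + (-1) * (hA2 0 2 0 2) + (1) * (hA2 1 2 0 3) + (-1) * (hA2 1 2 1 2) + (1) * (hA2 0 2 1 3) + (1) * (hA2 2 3 2 3) + (2) * (hPair 0 1 2 3) + (2) * (hPair 0 3 1 2) + (-2) * (hBianchi 0 1 2 3) + (2/3) * (hBianchi 2 2 2 2)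
  · linear_combination (2) * (hA1 0 2 3 0) + (2) * (hA1 1 2 3 1) + (-1) * (hA2 3 3 0 1) + (1) * (hA2 0 3 0 2) + (-2) * (hA2 0 2 0 3) + (1) * (hA2 1 3 0 3) + (1) * (hA2 1 3 1 2) + (-3) * (hA2 0 3 1 3) + (-2) * (hA2 1 2 1 3) + (4) * (hA2 2 2 2 3) + (-1) * (hA2 3 3 2 3) + (-2) * (hPair 0 1 3 3) + (2) * (hPair 0 2 0 3) + (2) * (hPair 0 3 1 3) + (2) * (hPair 1 2 1 3) + (-2) * (hPair 2 2 2 3) + (-2) * (hPair 2 3 3 3) + (2) * (hBianchi 0 1 3 3) + (-2) * (hBianchi 2 2 2 3) + (4/3) * (hBianchi 2 3 3 3)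
  · linear_combination (1) * (hA1 0 1 0 2) + (-1) * (hA1 0 1 1 3) + (-1) * (hA1 0 1 2 0) + (1) * (hA1 0 1 3 1) + (-1) * (hA1 0 2 0 1) + (1) * (hA1 0 2 1 0) + (-1) * (hA1 0 2 2 3) + (1) * (hA1 0 2 3 2) + (2) * (hA1 0 3 0 0) + (2) * (hA1 1 3 0 1) + (2) * (hA1 2 3 0 2) + (-1) * (hA2 0 2 0 1) + (3) * (hA2 0 1 0 2) + (5) * (hA2 0 0 0 3) + (1) * (hA2 0 0 1 2) + (-1) * (hA2 0 1 1 3) + (-1) * (hA2 0 2 2 3) + (-2) * (hPair 0 0 0 3) + (-4) * (hPair 0 1 0 2) + (2) * (hPair 0 1 1 3) + (2) * (hPair 0 2 2 3) + (-2) * (hPair 0 3 3 3) + (-4) * (hBianchi 0 0 0 3) + (-2) * (hBianchi 0 0 1 2) + (2/3) * (hBianchi 0 3 3 3)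
  · linear_combination (2) * (hA1 0 3 1 0) + (-1) * (hA1 1 2 0 1) + (1) * (hA1 1 2 1 0) + (-1) * (hA1 1 2 2 3) + (1) * (hA1 1 2 3 2) + (2) * (hA1 1 3 1 1) + (2) * (hA1 2 3 1 2) + (-2) * (hA2 0 3 0 1) + (-1) * (hA2 1 2 0 1) + (-1) * (hA2 1 1 0 2) + (1) * (hA2 0 1 0 3) + (-1) * (hA2 0 1 1 2) + (5) * (hA2 1 1 1 3) + (-1) * (hA2 1 2 2 3) + (-2) * (hPair 0 1 0 3) + (-2) * (hPair 0 1 1 2) + (-2) * (hPair 0 2 1 1) + (-2) * (hPair 1 1 1 3) + (2) * (hPair 1 2 2 3) + (-2) * (hPair 1 3 3 3) + (2) * (hBianchi 0 1 1 2) + (-4) * (hBianchi 1 1 1 3) + (2/3) * (hBianchi 1 3 3 3)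
  · linear_combination (2) * (hA1 0 3 2 0) + (2) * (hA1 1 3 2 1) + (2) * (hA1 2 3 2 2) + (1) * (hA2 2 2 0 1) + (-2) * (hA2 0 3 0 2) + (-1) * (hA2 1 2 0 2) + (1) * (hA2 0 2 0 3) + (3) * (hA2 0 2 1 2) + (-2) * (hA2 1 3 1 2) + (1) * (hA2 1 2 1 3) + (5) * (hA2 2 2 2 3) + (2) * (hPair 0 1 2 2) + (-2) * (hPair 0 2 0 3) + (-2) * (hPair 0 2 1 2) + (-2) * (hPair 1 2 1 3) + (-2) * (hPair 2 2 2 3) + (-2) * (hPair 2 3 3 3) + (-2) * (hBianchi 0 1 2 2) + (-4) * (hBianchi 2 2 2 3) + (2/3) * (hBianchi 2 3 3 3)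
  · linear_combination (2) * (hA1 0 3 3 0) + (2) * (hA1 1 3 3 1) + (2) * (hA1 2 3 3 2) + (1) * (hA2 2 3 0 1) + (-1) * (hA2 1 3 0 2) + (-1) * (hA2 0 3 0 3) + (1) * (hA2 0 3 1 2) + (2) * (hA2 0 2 1 3) + (-1) * (hA2 1 3 1 3) + (-1) * (hA2 2 3 2 3) + (2) * (hPair 0 1 2 3) + (-2) * (hPair 0 2 1 3) + (-2) * (hBianchi 0 1 2 3) + (2/3) * (hBianchi 3 3 3 3)
end
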